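/- Fix k ≥ 1 and v, w ∈ U(k). For every 𝔲 ∈ 𝔘 there exists a unique element 𝔲.g ∈ 𝔘 such that π_m(𝔲.g) = (w ⊕ I_{m−k})^{-1} · π_m(𝔲) · (v ⊕ I_{m−k}) for all m ≥ k, where x ⊕ I_{m−k} denotes the block-diagonal embedding of U(k) into U(m). The resulting map 𝔘 → 𝔘, 𝔲 ↦ 𝔲.g, is Borel measurable and preserves the measure χ: the pushforward of χ under this map equals χ. -/

import Mathlib

open MeasureTheory Filter Matrix
open scoped ENNReal ComplexConjugate

noncomputable section

/-- The unitary group `U(m+1)` (so `UU m` is the paper's `U(m+1)`, `m ≥ 0`). -/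
abbrev UU (m : ℕ) : Type := Matrix.unitaryGroup (Fin (m + 1)) ℂ

instance (m : ℕ) : MeasurableSpace (UU m) := borel _
instance (m : ℕ) : BorelSpace (UU m) := ⟨rfl⟩

/-- The block transform of the paper: for `u = [[z,a],[b,t]] ∈ U(m+2)` it returns
`z - a (1+t)⁻¹ b` if `t ≠ -1`, and `z` if `t = -1`. -/
def blockPi (m : ℕ) (u : UU (m + 1)) : Matrix (Fin (m + 1)) (Fin (m + 1)) ℂ :=
  let M : Matrix (Fin (m + 2)) (Fin (m + 2)) ℂ := u
  if M (Fin.last (m + 1)) (Fin.last (m + 1)) = -1 then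
    fun i j => M i.castSucc j.castSucc
  else
    fun i j => M i.castSucc j.castSucc -
      M i.castSucc (Fin.last (m + 1)) *
        (1 + M (Fin.last (m + 1)) (Fin.last (m + 1)))⁻¹ *
        M (Fin.last (m + 1)) j.castSucc

/-- `π` is the projective system of maps `π_m^{m+1}` of the paper. -/
def IsProjSystem (π : ∀ m, UU (m + 1) → UU m) : Prop :=
  ∀ (m : ℕ) (u : UU (m + 1)),
    ((π m u : Matrix (Fin (m + 1)) (Fin (m + 1)) ℂ)) = blockPi m u

/-- The projective limit `𝔘` of the groups `U(m+1)` under `π`. -/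
abbrev VU (π : ∀ m, UU (m + 1) → UU m) : Type :=
  { u : ∀ m, UU m // ∀ m, π m (u (m + 1)) = u m }

/-- The last diagonal entry of a unitary matrix, i.e. the paper's `⟨u(𝔢_i) ∣ 𝔢_i⟩`. -/
def pwEntry (m : ℕ) (v : UU m) : ℂ :=
  (v : Matrix (Fin (m + 1)) (Fin (m + 1)) ℂ) (Fin.last m) (Fin.last m)

/-- The Paley–Wiener coordinate functions `φ_i` on the projective limit. -/
def pw (π : ∀ m, UU (m + 1) → UU m) (i : ℕ) (u : VU π) : ℂ := pwEntry i (u.1 i)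

/-- The block-diagonal embedding `v ↦ v ⊕ I` of a `(k+1)×(k+1)` matrix into
`(m+1)×(m+1)` matrices (`k ≤ m`). -/
def embedMat (k m : ℕ) (v : Matrix (Fin (k + 1)) (Fin (k + 1)) ℂ) :
    Matrix (Fin (m + 1)) (Fin (m + 1)) ℂ := fun i j =>
  if h : (i : ℕ) < k + 1 ∧ (j : ℕ) < k + 1 then v ⟨i, h.1⟩ ⟨j, h.2⟩
  else if (i : ℕ) = (j : ℕ) then 1 else 0

/-! ### Auxiliary material -/
namespace S1

instance (n m : ℕ) : MeasurableSpace (Matrix (Fin n) (Fin m) ℂ) :=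
  (inferInstance : MeasurableSpace (Fin n → Fin m → ℂ))
instance (n m : ℕ) : BorelSpace (Matrix (Fin n) (Fin m) ℂ) :=
  (inferInstance : BorelSpace (Fin n → Fin m → ℂ))
instance (n m : ℕ) : SecondCountableTopology (Matrix (Fin n) (Fin m) ℂ) :=
  (inferInstance : SecondCountableTopology (Fin n → Fin m → ℂ))
instance (m : ℕ) : SecondCountableTopology (UU m) :=
  Topology.IsInducing.secondCountableTopology Topology.IsInducing.subtypeVal
instance (m : ℕ) : ContinuousInv (UU m) :=
  ⟨(continuous_star.comp continuous_subtype_val).subtype_mk _⟩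

lemma measurable_toUU {α : Type*} [MeasurableSpace α] {m : ℕ} (f : α → UU m)
    (hf : Measurable fun a => (f a : Matrix (Fin (m+1)) (Fin (m+1)) ℂ)) : Measurable f := by
  refine measurable_generateFrom ?_
  rintro t ht
  obtain ⟨U, hU, rfl⟩ := isOpen_induced_iff.1 ht
  exact hf hU.measurableSet

lemma measurable_coeUU (m : ℕ) :
    Measurable (fun u : UU m => (u : Matrix (Fin (m+1)) (Fin (m+1)) ℂ)) :=
  Continuous.measurable (continuous_subtype_val :
    Continuous (fun u : UU m => (u : Matrix (Fin (m+1)) (Fin (m+1)) ℂ)))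

lemma measurable_entry {m : ℕ} (i j : Fin (m+1)) :
    Measurable fun u : UU m => (u : Matrix (Fin (m+1)) (Fin (m+1)) ℂ) i j :=
  (measurable_pi_apply j).comp ((measurable_pi_apply i).comp (measurable_coeUU m))

lemma measurable_blockPi (m : ℕ) : Measurable (blockPi m) := by
  apply measurable_pi_lambda
  intro i
  apply measurable_pi_lambda
  intro j
  have key : (fun u : UU (m+1) => blockPi m u i j) = fun u : UU (m+1) =>
      if (u : Matrix (Fin (m+2)) (Fin (m+2)) ℂ) (Fin.last (m+1)) (Fin.last (m+1)) = -1 then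
        (u : Matrix (Fin (m+2)) (Fin (m+2)) ℂ) i.castSucc j.castSucc
      else (u : Matrix (Fin (m+2)) (Fin (m+2)) ℂ) i.castSucc j.castSucc -
        (u : Matrix (Fin (m+2)) (Fin (m+2)) ℂ) i.castSucc (Fin.last (m+1)) *
          (1 + (u : Matrix (Fin (m+2)) (Fin (m+2)) ℂ) (Fin.last (m+1)) (Fin.last (m+1)))⁻¹ *
          (u : Matrix (Fin (m+2)) (Fin (m+2)) ℂ) (Fin.last (m+1)) j.castSucc := by
    funext u
    simp only [blockPi]
    by_cases hc : (u : Matrix (Fin (m+2)) (Fin (m+2)) ℂ) (Fin.last (m+1)) (Fin.last (m+1)) = -1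
    · rw [if_pos hc]; exact congrArg (fun M : Matrix (Fin (m+1)) (Fin (m+1)) ℂ => M i j) (if_pos hc)
    · rw [if_neg hc]; exact congrArg (fun M : Matrix (Fin (m+1)) (Fin (m+1)) ℂ => M i j) (if_neg hc)
  rw [key]
  apply Measurable.ite
  · exact (measurable_entry _ _) (measurableSet_singleton (-1))
  · exact measurable_entry _ _
  · exact (measurable_entry _ _).sub (((measurable_entry _ _).mul
      ((measurable_const.add (measurable_entry _ _)).inv)).mul (measurable_entry _ _))

lemma measurable_proj {π : ∀ m, UU (m + 1) → UU m} (hπ : IsProjSystem π) (m : ℕ) :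
    Measurable (π m) := by
  apply measurable_toUU
  have : (fun u => ((π m u : Matrix (Fin (m+1)) (Fin (m+1)) ℂ))) = blockPi m := funext (hπ m)
  rw [this]; exact measurable_blockPi m

/-- iterated projection -/
def dw (π : ∀ m, UU (m + 1) → UU m) (m : ℕ) : ∀ n, UU (m + n) → UU m
  | 0, x => x
  | n+1, x => dw π m n (π (m+n) x)

lemma measurable_dw {π : ∀ m, UU (m + 1) → UU m} (hπ : IsProjSystem π) (m : ℕ) :
    ∀ n, Measurable (dw π m n) := by
  intro n
  induction n with
  | zero => exact measurable_id
  | succ n ih => exact ih.comp (measurable_proj hπ (m+n))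

def castU {a b : ℕ} (h : a = b) (x : UU a) : UU b := _root_.cast (congrArg UU h) x

lemma castU_proj {π : ∀ m, UU (m + 1) → UU m} {a b : ℕ} (h : a = b) (h' : a + 1 = b + 1)
    (x : UU (a+1)) : π b (castU h' x) = castU h (π a x) := by
  subst h; rfl

lemma measurable_castU {a b : ℕ} (h : a = b) : Measurable (castU h) := by
  subst h; exact measurable_id

lemma castU_coord {π : ∀ m, UU (m + 1) → UU m} (z : VU π) {a b : ℕ} (e : a = b) :
    castU e (z.1 a) = z.1 b := by subst e; rfl

lemma dw_coord {π : ∀ m, UU (m + 1) → UU m} (z : VU π) (m : ℕ) :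
    ∀ n, dw π m n (z.1 (m+n)) = z.1 m := by
  intro n
  induction n with
  | zero => rfl
  | succ n ih => show dw π m n (π (m+n) (z.1 (m+n+1))) = z.1 m
                 rw [z.2 (m+n)]; exact ih

lemma dw_succ {π : ∀ m, UU (m + 1) → UU m} :
    ∀ (n m : ℕ) (X : UU ((m+1)+n)),
      π m (dw π (m+1) n X) = dw π m (n+1) (castU (by omega) X) := by
  intro n
  induction n with
  | zero =>
      intro m X
      show π m X = π m (castU (by omega) X)
      exact congrArg (π m) (eq_of_heq (cast_heq _ _)).symm
  | succ n ih =>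
      intro m X
      show π m (dw π (m+1) n (π ((m+1)+n) X)) = dw π m (n+1) (π (m+(n+1)) (castU _ X))
      rw [castU_proj (π := π) (show (m+1)+n = m+(n+1) from by omega)
        (show (m+1)+(n+1) = m+(n+1+1) from by omega) X]
      exact ih m (π ((m+1)+n) X)

/-- the coordinate `n` of an element of the projective limit is a measurable function of
coordinate `n'`, for `n ≤ n'`. -/
lemma coordFactor {π : ∀ m, UU (m + 1) → UU m} (hπ : IsProjSystem π) {n n' : ℕ} (h : n ≤ n') :
    ∃ g : UU n' → UU n, Measurable g ∧ ∀ z : VU π, g (z.1 n') = z.1 n := by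
  refine ⟨fun x => dw π n (n'-n) (castU (show n' = n + (n'-n) by omega) x),
    (measurable_dw hπ _ _).comp (measurable_castU (show n' = n + (n'-n) by omega)), fun z => ?_⟩
  show dw π n (n'-n) (castU _ (z.1 n')) = z.1 n
  rw [castU_coord z (show n' = n + (n'-n) by omega)]
  exact dw_coord z n (n'-n)

end S1

namespace S1

section Embed
variable {k m : ℕ}

def eqv (k m : ℕ) (h : k ≤ m) : (Fin (k+1) ⊕ Fin (m-k)) ≃ Fin (m+1) :=
  finSumFinEquiv.trans (finCongr (by omega))

lemma eqv_symm_lt (h : k ≤ m) (i : Fin (m+1)) (hi : (i : ℕ) < k+1) :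
    (eqv k m h).symm i = Sum.inl ⟨i, hi⟩ := by
  rw [Equiv.symm_apply_eq]
  apply Fin.ext
  simp [eqv]

lemma eqv_symm_ge (h : k ≤ m) (i : Fin (m+1)) (hi : ¬ (i : ℕ) < k+1) :
    (eqv k m h).symm i = Sum.inr ⟨(i : ℕ) - (k+1), by omega⟩ := by
  rw [Equiv.symm_apply_eq]
  apply Fin.ext
  simp [eqv]
  omega

lemma embedMat_eq (h : k ≤ m) (x : Matrix (Fin (k+1)) (Fin (k+1)) ℂ) :
    embedMat k m x = (Matrix.fromBlocks x 0 0 (1 : Matrix (Fin (m-k)) (Fin (m-k)) ℂ)).submatrix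
      (eqv k m h).symm (eqv k m h).symm := by
  ext i j
  rcases Nat.lt_or_ge (i : ℕ) (k+1) with hi | hi <;> rcases Nat.lt_or_ge (j : ℕ) (k+1) with hj | hj
  · rw [Matrix.submatrix_apply, eqv_symm_lt h i hi, eqv_symm_lt h j hj,
      Matrix.fromBlocks_apply₁₁, embedMat, dif_pos ⟨hi, hj⟩]
  · rw [Matrix.submatrix_apply, eqv_symm_lt h i hi, eqv_symm_ge h j (by omega),
      Matrix.fromBlocks_apply₁₂, embedMat, dif_neg (by omega), if_neg (by omega)]
    rfl
  · rw [Matrix.submatrix_apply, eqv_symm_ge h i (by omega), eqv_symm_lt h j hj,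
      Matrix.fromBlocks_apply₂₁, embedMat, dif_neg (by omega), if_neg (by omega)]
    rfl
  · rw [Matrix.submatrix_apply, eqv_symm_ge h i (by omega), eqv_symm_ge h j (by omega),
      Matrix.fromBlocks_apply₂₂, embedMat, dif_neg (by omega), Matrix.one_apply]
    by_cases hij : (i : ℕ) = (j : ℕ)
    · rw [if_pos hij, if_pos (by apply Fin.ext; simp; omega)]
    · rw [if_neg hij, if_neg (by intro hc; apply hij; have := congrArg Fin.val hc; simp at this; omega)]

lemma embedMat_mem (h : k ≤ m) (x : UU k) :
    embedMat k m (x : Matrix (Fin (k+1)) (Fin (k+1)) ℂ) ∈ Matrix.unitaryGroup (Fin (m+1)) ℂ := by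
  rw [embedMat_eq h, Matrix.mem_unitaryGroup_iff]
  have hx : (x : Matrix (Fin (k+1)) (Fin (k+1)) ℂ) * star (x : Matrix (Fin (k+1)) (Fin (k+1)) ℂ)
      = 1 := Matrix.mem_unitaryGroup_iff.mp x.2
  rw [Matrix.star_eq_conjTranspose, Matrix.conjTranspose_submatrix,
    Matrix.fromBlocks_conjTranspose]
  rw [show ((eqv k m h).symm : Fin (m+1) → (Fin (k+1) ⊕ Fin (m-k))) = ((eqv k m h).symm : _ ≃ _)
    from rfl]
  rw [Matrix.submatrix_mul_equiv]
  simp only [Matrix.fromBlocks_multiply, Matrix.mul_zero, Matrix.zero_mul, add_zero,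
    zero_add, Matrix.conjTranspose_zero, Matrix.conjTranspose_one, Matrix.mul_one,
    Matrix.one_mul, ← Matrix.star_eq_conjTranspose, hx, Matrix.fromBlocks_one,
    Matrix.submatrix_one_equiv, star_one]

def embedU (h : k ≤ m) (x : UU k) : UU m := ⟨embedMat k m x, embedMat_mem h x⟩

end Embed
end S1

namespace S1
section Conj
variable {k m : ℕ}

lemma embed_castSucc (xm : Matrix (Fin (k+1)) (Fin (k+1)) ℂ) (i j : Fin (m+1)) :
    embedMat k (m+1) xm i.castSucc j.castSucc = embedMat k m xm i j := by
  simp only [embedMat, Fin.coe_castSucc]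

lemma embed_last_castSucc (h : k ≤ m) (xm : Matrix (Fin (k+1)) (Fin (k+1)) ℂ) (j : Fin (m+1)) :
    embedMat k (m+1) xm (Fin.last (m+1)) j.castSucc = 0 := by
  have hj := j.isLt
  simp only [embedMat, Fin.val_last, Fin.coe_castSucc]
  rw [dif_neg (by omega), if_neg (by omega)]

lemma embed_castSucc_last (h : k ≤ m) (xm : Matrix (Fin (k+1)) (Fin (k+1)) ℂ) (i : Fin (m+1)) :
    embedMat k (m+1) xm i.castSucc (Fin.last (m+1)) = 0 := by
  have hi := i.isLt
  simp only [embedMat, Fin.val_last, Fin.coe_castSucc]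
  rw [dif_neg (by omega), if_neg (by omega)]

lemma embed_last_last (h : k ≤ m) (xm : Matrix (Fin (k+1)) (Fin (k+1)) ℂ) :
    embedMat k (m+1) xm (Fin.last (m+1)) (Fin.last (m+1)) = 1 := by
  simp only [embedMat, Fin.val_last]
  rw [dif_neg (by omega)]
  simp

lemma mulG_castSucc (h : k ≤ m) (xm : Matrix (Fin (k+1)) (Fin (k+1)) ℂ)
    (X : Matrix (Fin (m+2)) (Fin (m+2)) ℂ) (i : Fin (m+1)) (j : Fin (m+2)) :
    (embedMat k (m+1) xm * X) i.castSucc j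
      = ∑ p : Fin (m+1), embedMat k m xm i p * X p.castSucc j := by
  rw [Matrix.mul_apply, Fin.sum_univ_castSucc, embed_castSucc_last h, zero_mul, add_zero]
  exact Finset.sum_congr rfl fun p _ => by rw [embed_castSucc]

lemma mulG_last (h : k ≤ m) (xm : Matrix (Fin (k+1)) (Fin (k+1)) ℂ)
    (X : Matrix (Fin (m+2)) (Fin (m+2)) ℂ) (j : Fin (m+2)) :
    (embedMat k (m+1) xm * X) (Fin.last (m+1)) j = X (Fin.last (m+1)) j := by
  rw [Matrix.mul_apply, Fin.sum_univ_castSucc, embed_last_last h, one_mul]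
  simp [embed_last_castSucc h]

lemma mulH_castSucc (h : k ≤ m) (xm : Matrix (Fin (k+1)) (Fin (k+1)) ℂ)
    (X : Matrix (Fin (m+2)) (Fin (m+2)) ℂ) (i : Fin (m+2)) (j : Fin (m+1)) :
    (X * embedMat k (m+1) xm) i j.castSucc
      = ∑ q : Fin (m+1), X i q.castSucc * embedMat k m xm q j := by
  rw [Matrix.mul_apply, Fin.sum_univ_castSucc, embed_last_castSucc h, mul_zero, add_zero]
  exact Finset.sum_congr rfl fun q _ => by rw [embed_castSucc]

lemma mulH_last (h : k ≤ m) (xm : Matrix (Fin (k+1)) (Fin (k+1)) ℂ)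
    (X : Matrix (Fin (m+2)) (Fin (m+2)) ℂ) (i : Fin (m+2)) :
    (X * embedMat k (m+1) xm) i (Fin.last (m+1)) = X i (Fin.last (m+1)) := by
  rw [Matrix.mul_apply, Fin.sum_univ_castSucc, embed_last_last h, mul_one]
  simp [embed_castSucc_last h]

lemma triple_apply {n : ℕ} (a b c : Matrix (Fin n) (Fin n) ℂ) (i j : Fin n) :
    (a * b * c) i j = ∑ p, a i p * (∑ q, b p q * c q j) := by
  rw [mul_assoc, Matrix.mul_apply]
  exact Finset.sum_congr rfl fun p _ => by rw [Matrix.mul_apply]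

lemma blockPi_conj (h : k ≤ m) (x y : UU k) (u : UU (m+1)) :
    blockPi m (embedU (h.trans (Nat.le_succ m)) x * u * embedU (h.trans (Nat.le_succ m)) y) =
      embedMat k m (x : Matrix (Fin (k+1)) (Fin (k+1)) ℂ) * blockPi m u *
        embedMat k m (y : Matrix (Fin (k+1)) (Fin (k+1)) ℂ) := by
  set U : Matrix (Fin (m+2)) (Fin (m+2)) ℂ := (u : Matrix (Fin (m+2)) (Fin (m+2)) ℂ) with hU
  set xm : Matrix (Fin (k+1)) (Fin (k+1)) ℂ := (x : Matrix (Fin (k+1)) (Fin (k+1)) ℂ) with hxm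
  set ym : Matrix (Fin (k+1)) (Fin (k+1)) ℂ := (y : Matrix (Fin (k+1)) (Fin (k+1)) ℂ) with hym
  have coeM : ((embedU (h.trans (Nat.le_succ m)) x * u * embedU (h.trans (Nat.le_succ m)) y :
      UU (m+1)) : Matrix (Fin (m+2)) (Fin (m+2)) ℂ)
      = embedMat k (m+1) xm * U * embedMat k (m+1) ym := rfl
  have hT : (embedMat k (m+1) xm * U * embedMat k (m+1) ym) (Fin.last (m+1)) (Fin.last (m+1))
      = U (Fin.last (m+1)) (Fin.last (m+1)) := by
    rw [mul_assoc, mulG_last h, mulH_last h]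
  have hZ : ∀ i j : Fin (m+1),
      (embedMat k (m+1) xm * U * embedMat k (m+1) ym) i.castSucc j.castSucc
        = ∑ p, embedMat k m xm i p * (∑ q, U p.castSucc q.castSucc * embedMat k m ym q j) := by
    intro i j
    rw [mul_assoc, mulG_castSucc h]
    exact Finset.sum_congr rfl fun p _ => by rw [mulH_castSucc h]
  have hA : ∀ i : Fin (m+1),
      (embedMat k (m+1) xm * U * embedMat k (m+1) ym) i.castSucc (Fin.last (m+1))
        = ∑ p, embedMat k m xm i p * U p.castSucc (Fin.last (m+1)) := by
    intro i
    rw [mul_assoc, mulG_castSucc h]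
    exact Finset.sum_congr rfl fun p _ => by rw [mulH_last h]
  have hB : ∀ j : Fin (m+1),
      (embedMat k (m+1) xm * U * embedMat k (m+1) ym) (Fin.last (m+1)) j.castSucc
        = ∑ q, U (Fin.last (m+1)) q.castSucc * embedMat k m ym q j := by
    intro j
    rw [mul_assoc, mulG_last h, mulH_castSucc h]
  simp only [blockPi]
  rw [coeM, hT]
  by_cases ht : U (Fin.last (m+1)) (Fin.last (m+1)) = -1
  · have ht' : (u : Matrix (Fin (m+2)) (Fin (m+2)) ℂ) (Fin.last (m+1)) (Fin.last (m+1)) = -1 := ht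
    simp only [ht, ht', eq_self_iff_true, ↓reduceIte]
    ext i j
    rw [hZ i j]; exact (triple_apply _ _ _ i j).symm
  · have ht' : ¬ (u : Matrix (Fin (m+2)) (Fin (m+2)) ℂ) (Fin.last (m+1)) (Fin.last (m+1)) = -1 := ht
    simp only [ht, ht', ↓reduceIte]
    ext i j
    rw [hA, hB, hZ]; erw [triple_apply]
    set c := (1 + U (Fin.last (m+1)) (Fin.last (m+1)))⁻¹ with hc
    rw [show (∑ p, embedMat k m xm i p * U p.castSucc (Fin.last (m+1))) * c *
          (∑ q, U (Fin.last (m+1)) q.castSucc * embedMat k m ym q j)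
        = ∑ p, ∑ q, embedMat k m xm i p *
            (U p.castSucc (Fin.last (m+1)) * c * U (Fin.last (m+1)) q.castSucc) *
            embedMat k m ym q j from by
      simp only [Finset.sum_mul, Finset.mul_sum]
      rw [Finset.sum_comm]
      exact Finset.sum_congr rfl fun p _ => Finset.sum_congr rfl fun q _ => by ring]
    rw [← Finset.sum_sub_distrib]
    refine Finset.sum_congr rfl fun p _ => ?_
    rw [Finset.mul_sum, Finset.mul_sum, ← Finset.sum_sub_distrib]
    exact Finset.sum_congr rfl fun q _ => by ring

end Conj
end S1

namespace S1
section Cons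
variable {k : ℕ}

lemma proj_conj {π : ∀ m, UU (m + 1) → UU m} (hπ : IsProjSystem π) {m : ℕ} (h : k ≤ m)
    (x y : UU k) (u : UU (m+1)) :
    π m (embedU (h.trans (Nat.le_succ m)) x * u * embedU (h.trans (Nat.le_succ m)) y)
      = embedU h x * π m u * embedU h y := by
  apply Subtype.ext
  calc ((π m (embedU (h.trans (Nat.le_succ m)) x * u * embedU (h.trans (Nat.le_succ m)) y) : UU m)
        : Matrix (Fin (m+1)) (Fin (m+1)) ℂ)
      = blockPi m (embedU (h.trans (Nat.le_succ m)) x * u * embedU (h.trans (Nat.le_succ m)) y) :=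
        hπ m _
    _ = embedMat k m (x : Matrix (Fin (k+1)) (Fin (k+1)) ℂ) * blockPi m u *
          embedMat k m (y : Matrix (Fin (k+1)) (Fin (k+1)) ℂ) := blockPi_conj h x y u
    _ = embedMat k m (x : Matrix (Fin (k+1)) (Fin (k+1)) ℂ) *
          ((π m u : UU m) : Matrix (Fin (m+1)) (Fin (m+1)) ℂ) *
          embedMat k m (y : Matrix (Fin (k+1)) (Fin (k+1)) ℂ) := by rw [hπ m u]
    _ = ((embedU h x * π m u * embedU h y : UU m) : Matrix (Fin (m+1)) (Fin (m+1)) ℂ) := rfl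

def Fc (π : ∀ m, UU (m + 1) → UU m) (k : ℕ) (v w : UU k) (u : VU π) (n : ℕ) (hn : k ≤ n) :
    UU n :=
  embedU hn w⁻¹ * u.1 n * embedU hn v

variable {π : ∀ m, UU (m + 1) → UU m}

lemma Fc_proj (hπ : IsProjSystem π) (v w : UU k) (u : VU π) {n : ℕ} (hn : k ≤ n) :
    π n (Fc π k v w u (n+1) (hn.trans (Nat.le_succ n))) = Fc π k v w u n hn := by
  unfold Fc
  rw [proj_conj hπ hn, u.2 n]

def Yc (π : ∀ m, UU (m + 1) → UU m) (k : ℕ) (v w : UU k) (u : VU π) (m : ℕ) : UU m :=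
  dw π m k (Fc π k v w u (m+k) (Nat.le_add_left k m))

lemma castU_Fc (v w : UU k) (u : VU π) {a b : ℕ} (e : a = b) (ha : k ≤ a) (hb : k ≤ b) :
    castU e (Fc π k v w u a ha) = Fc π k v w u b hb := by subst e; rfl

lemma dw_Fc (hπ : IsProjSystem π) (v w : UU k) (u : VU π) :
    ∀ (n : ℕ) {m : ℕ} (hm : k ≤ m),
      dw π m n (Fc π k v w u (m+n) (by omega)) = Fc π k v w u m hm := by
  intro n
  induction n with
  | zero => intro m hm; rfl
  | succ n ih =>
      intro m hm
      show dw π m n (π (m+n) (Fc π k v w u ((m+n)+1) _)) = _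
      rw [Fc_proj hπ v w u (show k ≤ m+n by omega)]
      exact ih hm

lemma Yc_eq (hπ : IsProjSystem π) (v w : UU k) (u : VU π) {m : ℕ} (hm : k ≤ m) :
    Yc π k v w u m = Fc π k v w u m hm :=
  dw_Fc hπ v w u k hm

lemma Yc_compat (hπ : IsProjSystem π) (v w : UU k) (u : VU π) (m : ℕ) :
    π m (Yc π k v w u (m+1)) = Yc π k v w u m := by
  unfold Yc
  rw [dw_succ (π := π) k m (Fc π k v w u ((m+1)+k) (Nat.le_add_left k (m+1)))]
  rw [castU_Fc v w u (show (m+1)+k = m+(k+1) by omega) (by omega) (by omega)]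
  show dw π m k (π (m+k) (Fc π k v w u ((m+k)+1) _)) = _
  rw [Fc_proj hπ v w u (show k ≤ m+k by omega)]

lemma Yc_matrix (hπ : IsProjSystem π) (v w : UU k) (u : VU π) {m : ℕ} (hm : k ≤ m) :
    ((Yc π k v w u m : UU m) : Matrix (Fin (m+1)) (Fin (m+1)) ℂ)
      = embedMat k m ((w⁻¹ : UU k) : Matrix (Fin (k+1)) (Fin (k+1)) ℂ) *
          ((u.1 m : UU m) : Matrix (Fin (m+1)) (Fin (m+1)) ℂ) *
          embedMat k m ((v : UU k) : Matrix (Fin (k+1)) (Fin (k+1)) ℂ) := by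
  rw [Yc_eq hπ v w u hm]
  rfl

lemma Yc_unique (hπ : IsProjSystem π) (v w : UU k) (u y' : VU π)
    (hy' : ∀ m, k ≤ m → ((y'.1 m : UU m) : Matrix (Fin (m+1)) (Fin (m+1)) ℂ)
      = embedMat k m ((w⁻¹ : UU k) : Matrix (Fin (k+1)) (Fin (k+1)) ℂ) *
          ((u.1 m : UU m) : Matrix (Fin (m+1)) (Fin (m+1)) ℂ) *
          embedMat k m ((v : UU k) : Matrix (Fin (k+1)) (Fin (k+1)) ℂ)) :
    ∀ m, y'.1 m = Yc π k v w u m := by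
  have base : ∀ m, k ≤ m → y'.1 m = Yc π k v w u m := by
    intro m hm
    rw [Yc_eq hπ v w u hm]
    exact Subtype.ext ((hy' m hm).trans rfl)
  have key : ∀ j m, k ≤ m + j → y'.1 m = Yc π k v w u m := by
    intro j
    induction j with
    | zero => intro m hm; exact base m (by omega)
    | succ j ih =>
        intro m hm
        by_cases h' : k ≤ m
        · exact base m h'
        · calc y'.1 m = π m (y'.1 (m+1)) := (y'.2 m).symm
            _ = π m (Yc π k v w u (m+1)) := by rw [ih (m+1) (by omega)]
            _ = Yc π k v w u m := Yc_compat hπ v w u m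
  intro m
  exact key k m (Nat.le_add_left k m)

lemma measurable_Yc (hπ : IsProjSystem π) (v w : UU k) (m : ℕ) :
    Measurable fun u : VU π => Yc π k v w u m := by
  unfold Yc Fc
  apply (measurable_dw hπ m k).comp
  have h1 : Measurable fun u : VU π => u.1 (m+k) :=
    (measurable_pi_apply (m+k)).comp measurable_subtype_coe
  exact (measurable_const.mul h1).mul measurable_const

end Cons
end S1

namespace S1
section Meas

lemma left_eq_right {G : Type*} [Group G] [MeasurableSpace G] [MeasurableMul₂ G]
    (μ ν : Measure G) [IsProbabilityMeasure μ] [IsProbabilityMeasure ν]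
    [μ.IsMulLeftInvariant] [ν.IsMulRightInvariant] : μ = ν := by
  have key : ∀ f : G → ℝ≥0∞, Measurable f → ∫⁻ z, f z ∂μ = ∫⁻ z, f z ∂ν := by
    intro f hf
    have h1 : ∫⁻ x, ∫⁻ y, f (y * x) ∂ν ∂μ = ∫⁻ z, f z ∂ν := by
      have e : ∀ x : G, ∫⁻ y, f (y * x) ∂ν = ∫⁻ z, f z ∂ν := fun x =>
        lintegral_mul_right_eq_self f x
      simp only [e, lintegral_const, measure_univ, mul_one]
    have h2 : ∫⁻ y, ∫⁻ x, f (y * x) ∂μ ∂ν = ∫⁻ z, f z ∂μ := by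
      have e : ∀ y : G, ∫⁻ x, f (y * x) ∂μ = ∫⁻ z, f z ∂μ := fun y =>
        lintegral_mul_left_eq_self f y
      simp only [e, lintegral_const, measure_univ, mul_one]
    have h3 : ∫⁻ x, ∫⁻ y, f (y * x) ∂ν ∂μ = ∫⁻ y, ∫⁻ x, f (y * x) ∂μ ∂ν :=
      lintegral_lintegral_swap ((hf.comp (measurable_snd.mul measurable_fst)).aemeasurable)
    rw [← h2, ← h3, h1]
  ext s hs
  have := key (s.indicator 1) (measurable_one.indicator hs)
  rwa [lintegral_indicator_one hs, lintegral_indicator_one hs] at this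

lemma rightInv_of_leftInv {G : Type*} [Group G] [MeasurableSpace G] [MeasurableMul₂ G]
    [MeasurableInv G] (μ : Measure G) [IsProbabilityMeasure μ] [μ.IsMulLeftInvariant] :
    μ.IsMulRightInvariant := by
  haveI : IsProbabilityMeasure μ.inv := by
    constructor
    rw [Measure.inv, Measure.map_apply measurable_inv MeasurableSet.univ]
    simp
  have h : μ = μ.inv := left_eq_right μ μ.inv
  refine ⟨fun g => ?_⟩
  rw [h]
  exact map_mul_right_eq_self μ.inv g

variable {π : ∀ m, UU (m + 1) → UU m}

lemma measurable_coord (π : ∀ m, UU (m + 1) → UU m) (n : ℕ) :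
    Measurable fun z : VU π => z.1 n :=
  (measurable_pi_apply n).comp measurable_subtype_coe

def cylSets (π : ∀ m, UU (m + 1) → UU m) (k : ℕ) : Set (Set (VU π)) :=
  {s | ∃ n, k ≤ n ∧ ∃ B : Set (UU n), MeasurableSet B ∧ s = (fun z : VU π => z.1 n) ⁻¹' B}

lemma generateFrom_cyl (hπ : IsProjSystem π) (k : ℕ) :
    (inferInstance : MeasurableSpace (VU π)) = .generateFrom (cylSets π k) := by
  apply le_antisymm
  · have h0 : (inferInstance : MeasurableSpace (VU π))
        = MeasurableSpace.comap (Subtype.val) MeasurableSpace.pi := rfl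
    rw [h0, show (MeasurableSpace.pi : MeasurableSpace (∀ m, UU m))
        = ⨆ n, MeasurableSpace.comap (fun b : ∀ m, UU m => b n) (inferInstance) from rfl,
      MeasurableSpace.comap_iSup]
    refine iSup_le fun n => ?_
    rw [MeasurableSpace.comap_comp]
    intro s hs
    obtain ⟨B, hB, rfl⟩ := hs
    by_cases hkn : k ≤ n
    · exact MeasurableSpace.measurableSet_generateFrom ⟨n, hkn, B, hB, rfl⟩
    · obtain ⟨g, hg, hgz⟩ := coordFactor hπ (le_of_not_ge hkn : n ≤ k)
      have he : ((fun b : ∀ m, UU m => b n) ∘ (Subtype.val : VU π → ∀ m, UU m)) ⁻¹' B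
          = (fun z : VU π => z.1 k) ⁻¹' (g ⁻¹' B) := by
        ext z
        simp only [Set.mem_preimage, Function.comp_apply]
        rw [hgz z]
      rw [he]
      exact MeasurableSpace.measurableSet_generateFrom ⟨k, le_refl k, g ⁻¹' B, hg hB, rfl⟩
  · refine MeasurableSpace.generateFrom_le ?_
    rintro s ⟨n, hn, B, hB, rfl⟩
    exact (measurable_coord π n) hB

lemma piSystem_cyl (hπ : IsProjSystem π) (k : ℕ) : IsPiSystem (cylSets π k) := by
  rintro s ⟨n, hn, B, hB, rfl⟩ t ⟨n', hn', B', hB', rfl⟩ -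
  rcases le_total n n' with h | h
  · obtain ⟨g, hg, hgz⟩ := coordFactor hπ h
    refine ⟨n', hn', g ⁻¹' B ∩ B', (hg hB).inter hB', ?_⟩
    ext z
    simp only [Set.mem_inter_iff, Set.mem_preimage]
    rw [hgz z]
  · obtain ⟨g, hg, hgz⟩ := coordFactor hπ h
    refine ⟨n, hn, B ∩ g ⁻¹' B', hB.inter (hg hB'), ?_⟩
    ext z
    simp only [Set.mem_inter_iff, Set.mem_preimage]
    rw [hgz z]

end Meas
end S1

open S1
set_option maxHeartbeats 1000000
set_option synthInstance.maxHeartbeats 400000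

/-- The right action `𝔲 ↦ 𝔲.g`, `g = (v,w) ∈ U(k)×U(k)`, exists and is unique
on the projective limit, and any map realizing it is Borel measurable and preserves `χ`. -/
theorem statement1
    (π : ∀ m, UU (m + 1) → UU m) (hπ : IsProjSystem π)
    (χm : ∀ m, Measure (UU m))
    (hprob : ∀ m, IsProbabilityMeasure (χm m))
    (hinv : ∀ (m : ℕ) (g : UU m), (χm m).map (fun x => g * x) = χm m)
    (hcons : ∀ m, (χm (m + 1)).map (π m) = χm m)
    (χ : Measure (VU π)) (hχprob : IsProbabilityMeasure χ)
    (hχ : ∀ m, χ.map (fun u : VU π => u.1 m) = χm m)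
    (k : ℕ) (v w : UU k) :
    (∀ u : VU π, ∃! y : VU π, ∀ m, k ≤ m →
        ((y.1 m : Matrix (Fin (m + 1)) (Fin (m + 1)) ℂ)) =
          embedMat k m ((w⁻¹ : UU k) : Matrix (Fin (k + 1)) (Fin (k + 1)) ℂ) *
            (u.1 m : Matrix (Fin (m + 1)) (Fin (m + 1)) ℂ) *
            embedMat k m (v : Matrix (Fin (k + 1)) (Fin (k + 1)) ℂ)) ∧
    ∀ A : VU π → VU π,
      (∀ (u : VU π) (m : ℕ), k ≤ m →
        (((A u).1 m : Matrix (Fin (m + 1)) (Fin (m + 1)) ℂ)) =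
          embedMat k m ((w⁻¹ : UU k) : Matrix (Fin (k + 1)) (Fin (k + 1)) ℂ) *
            (u.1 m : Matrix (Fin (m + 1)) (Fin (m + 1)) ℂ) *
            embedMat k m (v : Matrix (Fin (k + 1)) (Fin (k + 1)) ℂ)) →
      Measurable A ∧ χ.map A = χ := by
  classical
  constructor
  · intro u
    refine ⟨⟨fun m => Yc π k v w u m, Yc_compat hπ v w u⟩, ?_, ?_⟩
    · intro m hm
      exact Yc_matrix hπ v w u hm
    · intro y' hy'
      exact Subtype.ext (funext fun m => Yc_unique hπ v w u y' hy' m)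
  · intro A hA
    have hAeq : A = fun u => (⟨fun m => Yc π k v w u m, Yc_compat hπ v w u⟩ : VU π) := by
      funext u
      exact Subtype.ext (funext fun m => Yc_unique hπ v w u (A u) (hA u) m)
    have hmeas : Measurable A := by
      rw [hAeq]
      exact Measurable.subtype_mk (measurable_pi_lambda _ (fun m => measurable_Yc hπ v w m))
    refine ⟨hmeas, ?_⟩
    haveI := hχprob
    haveI : ∀ n, IsProbabilityMeasure (χm n) := hprob
    haveI hleft : ∀ n, (χm n).IsMulLeftInvariant := fun n => ⟨fun g => hinv n g⟩
    haveI hmp : IsProbabilityMeasure (χ.map A)  := Measure.isProbabilityMeasure_map hmeas.aemeasurable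
    haveI : IsFiniteMeasure (χ.map A) := ⟨by rw [hmp.measure_univ]; exact ENNReal.one_lt_top⟩
    have hconj : ∀ (n : ℕ) (a b : UU n), (χm n).map (fun x => a * x * b) = χm n := by
      intro n a b
      haveI : (χm n).IsMulLeftInvariant := hleft n
      haveI : (χm n).IsMulRightInvariant := rightInv_of_leftInv (χm n)
      have hcomp : (fun x : UU n => a * x * b) = (fun x => x * b) ∘ (fun x => a * x) := rfl
      rw [hcomp, ← Measure.map_map (measurable_mul_const b) (measurable_const_mul a),
        hinv n a]
      exact map_mul_right_eq_self (χm n) b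
    refine ext_of_generate_finite (cylSets π k) (generateFrom_cyl hπ k) (piSystem_cyl hπ k)
      ?_ (by simp [measure_univ])
    rintro s ⟨n, hn, B, hB, rfl⟩
    have hsm : MeasurableSet ((fun z : VU π => z.1 n) ⁻¹' B) := (measurable_coord π n) hB
    have hmul : Measurable (fun x : UU n => embedU hn w⁻¹ * x * embedU hn v) :=
      (measurable_const.mul measurable_id).mul measurable_const
    have hcoord : ∀ C : Set (UU n), MeasurableSet C →
        χ ((fun z : VU π => z.1 n) ⁻¹' C) = χm n C := by
      intro C hC
      rw [← hχ n, Measure.map_apply (measurable_coord π n) hC]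
    have hres : A ⁻¹' ((fun z : VU π => z.1 n) ⁻¹' B)
        = (fun z : VU π => z.1 n) ⁻¹'
          ((fun x : UU n => embedU hn w⁻¹ * x * embedU hn v) ⁻¹' B) := by
      ext z
      simp only [Set.mem_preimage]
      have hz : (A z).1 n = embedU hn w⁻¹ * z.1 n * embedU hn v :=
        Subtype.ext ((hA z n hn).trans rfl)
      rw [hz]
    calc (χ.map A) ((fun z : VU π => z.1 n) ⁻¹' B)
        = χ (A ⁻¹' ((fun z : VU π => z.1 n) ⁻¹' B)) := Measure.map_apply hmeas hsm
      _ = χ ((fun z : VU π => z.1 n) ⁻¹'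
            ((fun x : UU n => embedU hn w⁻¹ * x * embedU hn v) ⁻¹' B)) := by rw [hres]
      _ = χm n ((fun x : UU n => embedU hn w⁻¹ * x * embedU hn v) ⁻¹' B) :=
            hcoord _ (hmul hB)
      _ = ((χm n).map (fun x : UU n => embedU hn w⁻¹ * x * embedU hn v)) B :=
            (Measure.map_apply hmul hB).symm
      _ = χm n B := by rw [hconj]
      _ = χ ((fun z : VU π => z.1 n) ⁻¹' B) := (hcoord _ hB).symm
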